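/- In the constrained two-environment linear regression game C-LRG with bound W > 0, suppose the least squares optimal solutions satisfy w₁*, w₂* ∈ 𝒲 and w₁* ≠ w₂*. Then at every pure Nash equilibrium (w₁†, w₂†) of C-LRG, at least one of the two predictors lies on the boundary of the ℓ∞ ball: ‖w₁†‖∞ = W or ‖w₂†‖∞ = W. -/

import Mathlib

open Matrix

/-- Risk of an environment with second-moment matrix `S` and cross-moment vector `ρ`
at the joint action `(w₁, w₂)`:  `(w₁+w₂)ᵀ S (w₁+w₂) − 2 ρᵀ (w₁+w₂)`. -/
noncomputable def risk {n : ℕ} (S : Matrix (Fin n) (Fin n) ℝ) (ρ : Fin n → ℝ)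
    (w₁ w₂ : Fin n → ℝ) : ℝ :=
  (w₁ + w₂) ⬝ᵥ (S *ᵥ (w₁ + w₂)) - 2 * (ρ ⬝ᵥ (w₁ + w₂))

private lemma sym_dot {n : ℕ} {S : Matrix (Fin n) (Fin n) ℝ} (hS : S.IsHermitian)
    (x y : Fin n → ℝ) : x ⬝ᵥ (S *ᵥ y) = y ⬝ᵥ (S *ᵥ x) := by
  rw [dotProduct_mulVec, ← mulVec_transpose]
  have : Sᵀ = S := by
    have := hS.eq
    rwa [conjTranspose_eq_transpose_of_trivial] at this
  rw [this, dotProduct_comm]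

/-- If `w` is interior and `u ↦ φ(u + c)` is minimized at `w` over the ball,
then the gradient vanishes: `S *ᵥ (w + c) = ρ`. -/
private lemma interior_min {n : ℕ} {S : Matrix (Fin n) (Fin n) ℝ} (hS : S.PosDef)
    {ρ w c : Fin n → ℝ} {W : ℝ} (hw : ‖w‖ < W)
    (hmin : ∀ u : Fin n → ℝ, ‖u‖ ≤ W →
      (w + c) ⬝ᵥ (S *ᵥ (w + c)) - 2 * (ρ ⬝ᵥ (w + c)) ≤
      (u + c) ⬝ᵥ (S *ᵥ (u + c)) - 2 * (ρ ⬝ᵥ (u + c))) :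
    S *ᵥ (w + c) = ρ := by
  set a := w + c with ha
  set d := ρ - S *ᵥ a with hd
  have hdz : d = 0 := by
    by_contra hdne
    have hq : 0 < d ⬝ᵥ d := by
      rcases lt_or_eq_of_le (Finset.sum_nonneg fun i _ => mul_self_nonneg (d i) :
        (0:ℝ) ≤ d ⬝ᵥ d) with h | h
      · exact h
      · exact absurd (dotProduct_self_eq_zero.mp h.symm) hdne
    have hp : 0 < d ⬝ᵥ (S *ᵥ d) := by
      have := hS.dotProduct_mulVec_pos hdne
      simpa using this
    have hdnorm : 0 < ‖d‖ := norm_pos_iff.mpr hdne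
    set t : ℝ := min ((W - ‖w‖) / ‖d‖) ((d ⬝ᵥ d) / (d ⬝ᵥ (S *ᵥ d))) with ht
    have htpos : 0 < t := lt_min (div_pos (by linarith) hdnorm) (div_pos hq hp)
    have hub : ‖w + t • d‖ ≤ W := by
      calc ‖w + t • d‖ ≤ ‖w‖ + ‖t • d‖ := norm_add_le _ _
        _ = ‖w‖ + t * ‖d‖ := by rw [norm_smul, Real.norm_of_nonneg htpos.le]
        _ ≤ ‖w‖ + ((W - ‖w‖) / ‖d‖) * ‖d‖ := by
            have := min_le_left ((W - ‖w‖) / ‖d‖) ((d ⬝ᵥ d) / (d ⬝ᵥ (S *ᵥ d)))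
            nlinarith
        _ = W := by field_simp; ring
    have hkey := hmin (w + t • d) hub
    have hexp : (w + t • d + c) ⬝ᵥ (S *ᵥ (w + t • d + c)) - 2 * (ρ ⬝ᵥ (w + t • d + c))
        = (a ⬝ᵥ (S *ᵥ a) - 2 * (ρ ⬝ᵥ a)) + t ^ 2 * (d ⬝ᵥ (S *ᵥ d)) - 2 * t * (d ⬝ᵥ d) := by
      have h1 : w + t • d + c = a + t • d := by rw [ha]; abel
      rw [h1]
      have hsym := sym_dot hS.1 d a
      have hsym2 : (S *ᵥ a) ⬝ᵥ d = a ⬝ᵥ (S *ᵥ d) := by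
        rw [dotProduct_comm]; exact hsym
      have hρd : ρ ⬝ᵥ d = d ⬝ᵥ d + a ⬝ᵥ (S *ᵥ d) := by
        have h3 : d ⬝ᵥ d = ρ ⬝ᵥ d - (S *ᵥ a) ⬝ᵥ d := by rw [hd, sub_dotProduct]
        linarith
      simp only [dotProduct_add, add_dotProduct, mulVec_add, mulVec_smul,
        dotProduct_smul, smul_dotProduct, smul_eq_mul]
      rw [hρd] at *
      nlinarith [hsym]
    rw [hexp] at hkey
    have htp : t * (d ⬝ᵥ (S *ᵥ d)) ≤ d ⬝ᵥ d := by
      have := min_le_right ((W - ‖w‖) / ‖d‖) ((d ⬝ᵥ d) / (d ⬝ᵥ (S *ᵥ d)))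
      calc t * (d ⬝ᵥ (S *ᵥ d)) ≤ ((d ⬝ᵥ d) / (d ⬝ᵥ (S *ᵥ d))) * (d ⬝ᵥ (S *ᵥ d)) := by
            exact mul_le_mul_of_nonneg_right this hp.le
        _ = d ⬝ᵥ d := by field_simp
    nlinarith
  have : ρ - S *ᵥ a = 0 := hd ▸ hdz
  have := sub_eq_zero.mp this
  exact this.symm

/-- In the constrained game C-LRG with bound `W > 0`, if the least
squares optimal solutions `w₁* = Σ₁⁻¹ρ₁` and `w₂* = Σ₂⁻¹ρ₂` lie in the ball `𝒲`
and differ, then at every pure Nash equilibrium `(w₁†, w₂†)` at least one predictor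
is on the boundary of the `ℓ∞` ball: `‖w₁†‖∞ = W` or `‖w₂†‖∞ = W`. -/
theorem clrg_nash_boundary {n : ℕ}
    (S₁ S₂ : Matrix (Fin n) (Fin n) ℝ) (hS₁ : S₁.PosDef) (hS₂ : S₂.PosDef)
    (ρ₁ ρ₂ : Fin n → ℝ) (W : ℝ) (hW : 0 < W)
    (hls₁ : ‖S₁⁻¹ *ᵥ ρ₁‖ ≤ W) (hls₂ : ‖S₂⁻¹ *ᵥ ρ₂‖ ≤ W)
    (hne : S₁⁻¹ *ᵥ ρ₁ ≠ S₂⁻¹ *ᵥ ρ₂)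
    (w₁ w₂ : Fin n → ℝ) (hw₁ : ‖w₁‖ ≤ W) (hw₂ : ‖w₂‖ ≤ W)
    (hN₁ : ∀ u : Fin n → ℝ, ‖u‖ ≤ W → risk S₁ ρ₁ w₁ w₂ ≤ risk S₁ ρ₁ u w₂)
    (hN₂ : ∀ v : Fin n → ℝ, ‖v‖ ≤ W → risk S₂ ρ₂ w₁ w₂ ≤ risk S₂ ρ₂ w₁ v) :
    ‖w₁‖ = W ∨ ‖w₂‖ = W := by
  by_contra h
  push_neg at h
  obtain ⟨h1, h2⟩ := h
  have hlt₁ : ‖w₁‖ < W := lt_of_le_of_ne hw₁ h1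
  have hlt₂ : ‖w₂‖ < W := lt_of_le_of_ne hw₂ h2
  have e₁ : S₁ *ᵥ (w₁ + w₂) = ρ₁ := by
    apply interior_min hS₁ hlt₁
    intro u hu
    simpa [risk] using hN₁ u hu
  have e₂ : S₂ *ᵥ (w₂ + w₁) = ρ₂ := by
    apply interior_min hS₂ hlt₂
    intro v hv
    have := hN₂ v hv
    simpa [risk, add_comm w₁] using this
  apply hne
  have i₁ : S₁⁻¹ *ᵥ ρ₁ = w₁ + w₂ := by
    rw [← e₁, mulVec_mulVec, nonsing_inv_mul _ (isUnit_iff_isUnit_det _ |>.1 hS₁.isUnit),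
      one_mulVec]
  have i₂ : S₂⁻¹ *ᵥ ρ₂ = w₂ + w₁ := by
    rw [← e₂, mulVec_mulVec, nonsing_inv_mul _ (isUnit_iff_isUnit_det _ |>.1 hS₂.isUnit),
      one_mulVec]
  rw [i₁, i₂, add_comm]
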